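/- Let A be a nonempty list of natural numbers sorted in nondecreasing order. Then the sum of the entries of diff(A) equals the last entry of A. Consequently, for nonempty sorted lists A and B, the sum of the entries of merge(diff(A), diff(B)) equals max(last(A), last(B)): merging in differential time preserves total elapsed time. -/

import Mathlib

/-- Differential encoding with respect to a previous time. -/
def diffAux : ℕ → List ℕ → List ℕ
  | _, [] => []
  | prev, a :: as => (a - prev) :: diffAux a as

/-- Differential encoding: `diff [a₁, …, aₙ] = [a₁ - 0, a₂ - a₁, …, aₙ - aₙ₋₁]`. -/
def diff (A : List ℕ) : List ℕ := diffAux 0 A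

/-- The spike-merge operation on differential-time encoded spike trains. -/
def smerge : List ℕ → List ℕ → List ℕ
  | [], ys => ys
  | xs, [] => xs
  | x :: xs, y :: ys =>
    if x ≤ y then x :: smerge xs ((y - x) :: ys)
    else y :: smerge ((x - y) :: xs) ys
termination_by xs ys => xs.length + ys.length
decreasing_by all_goals simp

/-- The entries of the differential encoding of a nonempty sorted spike train
sum (telescope) to its last absolute spike time, and merging in differential
time preserves the total elapsed time. -/
lemma diffAux_sum : ∀ (A : List ℕ) (prev : ℕ), A.Pairwise (· ≤ ·) → (h : A ≠ []) →
    prev ≤ A.head h → prev + (diffAux prev A).sum = A.getLast h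
  | [a], prev, _, _, hp => by
    simp only [List.head_cons] at hp
    simp [diffAux, Nat.add_sub_cancel' hp]
  | a :: b :: as, prev, hs, _, hp => by
    have hs' := hs.tail
    have hab : a ≤ b := (List.pairwise_cons.mp hs).1 b (by simp)
    have key := diffAux_sum (b :: as) a hs' (by simp) (by simpa using hab)
    simp only [List.head_cons] at hp
    rw [List.getLast_cons (by simp)]
    simp only [diffAux, List.sum_cons] at *
    omega

lemma smerge_sum : ∀ (xs ys : List ℕ), (smerge xs ys).sum = max xs.sum ys.sum := by
  intro xs ys
  induction xs, ys using smerge.induct with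
  | case1 ys => simp [smerge]
  | case2 xs h => cases xs <;> simp [smerge]
  | case3 x xs y ys hxy ih =>
    rw [smerge, if_pos hxy]
    simp only [List.sum_cons] at *
    omega
  | case4 x xs y ys hxy ih =>
    rw [smerge, if_neg hxy]
    simp only [List.sum_cons] at *
    omega

theorem sum_diff_eq_getLast
    (A B : List ℕ) (hA : A ≠ []) (hB : B ≠ [])
    (hAs : A.Pairwise (· ≤ ·)) (hBs : B.Pairwise (· ≤ ·)) :
    (diff A).sum = A.getLast hA ∧
    (smerge (diff A) (diff B)).sum = max (A.getLast hA) (B.getLast hB) := by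
  have h1 := diffAux_sum A 0 hAs hA (Nat.zero_le _)
  have h2 := diffAux_sum B 0 hBs hB (Nat.zero_le _)
  simp only [Nat.zero_add] at h1 h2
  exact ⟨h1, by rw [smerge_sum, diff, diff, h1, h2]⟩
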